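/- Let (R, m, k) be a commutative noetherian local ring, I an injective R-module, and 0 → M → F → C → 0 an exact sequence of R-modules such that the induced sequence 0 → Hom_R(C, F') → Hom_R(F, F') → Hom_R(M, F') → 0 is exact for every flat R-module F'. Then the sequence 0 → M ⊗_R I → F ⊗_R I → C ⊗_R I → 0 is exact. -/

import Mathlib

open TensorProduct

namespace TensorInjAux

variable {R : Type} [CommRing R] {I : Type} [AddCommGroup I] [Module R I]

/-- The natural map `N ⊗ I⋆ → (Hom(N,I))⋆`. -/
noncomputable def theta (N : Type) [AddCommGroup N] [Module R N] :
    N ⊗[R] CharacterModule I →ₗ[R] CharacterModule (N →ₗ[R] I) :=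
  TensorProduct.lift
  { toFun := fun n =>
    { toFun := fun χ =>
      { toFun := fun f => χ (f n)
        map_zero' := by simp
        map_add' := fun f g => by simp }
      map_add' := fun χ χ' => by ext f; rfl
      map_smul' := fun r χ => by ext f; rfl }
    map_add' := fun n n' => by
      ext χ f
      show χ (f (n + n')) = χ (f n) + χ (f n')
      rw [map_add, map_add]
    map_smul' := fun r n => by
      ext χ f
      show χ (f (r • n)) = χ ((r • f) n)
      rw [LinearMap.smul_apply, map_smul] }

lemma sum_apply' {A : Type} [AddCommGroup A] {ι : Type} (s : Finset ι)
    (g : ι → CharacterModule A) (a : A) :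
    (∑ j ∈ s, g j) a = ∑ j ∈ s, g j a := by
  classical
  induction s using Finset.induction_on with
  | empty => rfl
  | @insert a s h ih => rw [Finset.sum_insert h, Finset.sum_insert h, ← ih]; rfl

@[simp] lemma theta_tmul (N : Type) [AddCommGroup N] [Module R N]
    (n : N) (χ : CharacterModule I) (f : N →ₗ[R] I) :
    theta N (n ⊗ₜ[R] χ) f = χ (f n) := rfl

lemma theta_natural {N N' : Type} [AddCommGroup N] [Module R N]
    [AddCommGroup N'] [Module R N'] (g : N →ₗ[R] N')
    (x : N ⊗[R] CharacterModule I) :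
    theta N' (g.rTensor (CharacterModule I) x) =
      CharacterModule.dual (g.lcomp R I) (theta N x) := by
  induction x using TensorProduct.induction_on with
  | zero => simp; ext; rfl
  | tmul n χ => rfl
  | add a b ha hb => simp [map_add, ha, hb]

section pi

variable (nn : ℕ)

/-- The linear map `R^n → I`, `v ↦ v j • y`, additively in `y`. -/
def sm (j : Fin nn) : I →+ ((Fin nn → R) →ₗ[R] I) where
  toFun y :=
  { toFun := fun v => v j • y
    map_add' := fun v w => by simp [add_smul]
    map_smul' := fun r v => by simp [mul_smul] }
  map_zero' := by ext; simp
  map_add' y z := by ext v; simp [smul_add]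

@[simp] lemma sm_apply (j : Fin nn) (y : I) (v : Fin nn → R) :
    sm nn j y v = v j • y := rfl

lemma pi_decomp (f : (Fin nn → R) →ₗ[R] I) (v : Fin nn → R) :
    f v = ∑ j, v j • f (Pi.single j 1) := by
  have hv : v = ∑ j, v j • (Pi.single j (1 : R) : Fin nn → R) := by
    ext k
    simp [Pi.single_apply, Finset.sum_apply, mul_ite, eq_comm]
  conv_lhs => rw [hv]
  simp

lemma theta_pi_surjective :
    Function.Surjective (theta (R := R) (I := I) (Fin nn → R)) := by
  intro c
  refine ⟨∑ j, (Pi.single j 1 : Fin nn → R) ⊗ₜ (c.comp (sm nn j)), ?_⟩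
  ext f
  rw [map_sum]
  have : (∑ j, theta (Fin nn → R)
      ((Pi.single j 1 : Fin nn → R) ⊗ₜ[R] c.comp (sm nn j))) f
      = ∑ j, c (sm nn j (f (Pi.single j 1))) := by
    rw [sum_apply']
    rfl
  rw [this, ← map_sum]
  congr 1
  refine LinearMap.ext fun v => ?_
  rw [LinearMap.sum_apply]
  simp only [sm_apply]
  exact (pi_decomp nn f v).symm

/-- coordinate extraction of a tensor in `R^n ⊗ I⋆` -/
noncomputable def coord (j : Fin nn) :
    ((Fin nn → R) ⊗[R] CharacterModule I) →ₗ[R] CharacterModule I :=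
  TensorProduct.lift ((LinearMap.lsmul R (CharacterModule I)).comp (LinearMap.proj j))

@[simp] lemma coord_tmul (j : Fin nn) (v : Fin nn → R) (χ : CharacterModule I) :
    coord nn j (v ⊗ₜ[R] χ) = v j • χ := rfl

lemma coord_decomp (x : (Fin nn → R) ⊗[R] CharacterModule I) :
    x = ∑ j, (Pi.single j 1 : Fin nn → R) ⊗ₜ[R] coord nn j x := by
  induction x using TensorProduct.induction_on with
  | zero => simp
  | tmul v χ =>
    have : ∀ j : Fin nn, (Pi.single j 1 : Fin nn → R) ⊗ₜ[R] ((v j : R) • χ)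
        = (v j • (Pi.single j 1 : Fin nn → R)) ⊗ₜ[R] χ := fun j =>
      (smul_tmul _ _ _).symm
    simp only [coord_tmul, this]
    rw [← TensorProduct.sum_tmul]
    congr 1
    ext k
    simp [Pi.single_apply, Finset.sum_apply, mul_ite, eq_comm]
  | add a b ha hb =>
    simp only [map_add, tmul_add, Finset.sum_add_distrib, ← ha, ← hb]

lemma theta_pi_injective :
    Function.Injective (theta (R := R) (I := I) (Fin nn → R)) := by
  rw [injective_iff_map_eq_zero]
  intro x hx
  rw [coord_decomp nn x]
  have hcoord : ∀ j, coord nn j x = 0 := by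
    intro j
    ext y
    have h1 : theta (Fin nn → R) x (sm nn j y) = 0 := by rw [hx]; rfl
    rw [coord_decomp nn x, map_sum, sum_apply'] at h1
    have h2 : ∀ k : Fin nn,
        theta (Fin nn → R) ((Pi.single k 1 : Fin nn → R) ⊗ₜ[R] coord nn k x)
          (sm nn j y) = if k = j then (coord nn j x) y else 0 := by
      intro k
      rw [theta_tmul, sm_apply]
      by_cases hkj : k = j
      · subst hkj; simp
      · simp [Pi.single_apply, hkj]
    rw [Finset.sum_congr rfl (fun k _ => h2 k), Finset.sum_ite_eq'] at h1
    exact (by simpa using h1 : (coord nn j x) y = 0)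
  simp [hcoord]

end pi

/-- A character vanishing on the kernel of `g` factors through `g`. -/
lemma char_factor {B B' : Type} [AddCommGroup B] [AddCommGroup B']
    [Module R B] [Module R B'] (g : B →ₗ[R] B') (c : CharacterModule B)
    (hc : ∀ b, g b = 0 → c b = 0) :
    ∃ c' : CharacterModule B', ∀ b, c' (g b) = c b := by
  classical
  let gz : B →ₗ[ℤ] B' := g.toAddMonoidHom.toIntLinearMap
  let cz : B →ₗ[ℤ] AddCircle (1 : ℚ) := (c : B →+ AddCircle (1 : ℚ)).toIntLinearMap
  have hle : LinearMap.ker gz ≤ LinearMap.ker cz := fun b hb => hc b hb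
  let c₀ : (B ⧸ LinearMap.ker gz) →ₗ[ℤ] AddCircle (1 : ℚ) :=
    Submodule.liftQ _ cz hle
  let eqv := gz.quotKerEquivRange
  let c₁ : CharacterModule (LinearMap.range gz) :=
    (c₀ ∘ₗ eqv.symm.toLinearMap).toAddMonoidHom
  obtain ⟨c', hc'⟩ := CharacterModule.dual_surjective_of_injective (R := ℤ)
    (LinearMap.range gz).subtype (Submodule.injective_subtype _) c₁
  refine ⟨c', fun b => ?_⟩
  have h1 : c' (g b) = c₁ ⟨g b, ⟨b, rfl⟩⟩ :=
    DFunLike.congr_fun hc' ⟨g b, ⟨b, rfl⟩⟩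
  rw [h1]
  have h2 : eqv.symm ⟨g b, ⟨b, rfl⟩⟩ = Submodule.Quotient.mk b := by
    rw [LinearEquiv.symm_apply_eq]
    exact Subtype.ext (gz.quotKerEquivRange_apply_mk b).symm
  show c₀ (eqv.symm ⟨g b, ⟨b, rfl⟩⟩) = c b
  rw [h2]
  rfl

lemma dual_injective_of_surjective {A B : Type} [AddCommGroup A] [AddCommGroup B]
    [Module R A] [Module R B] {f : A →ₗ[R] B} (hf : Function.Surjective f) :
    Function.Injective (CharacterModule.dual (R := R) f) := by
  intro c c' h
  ext b
  obtain ⟨a, rfl⟩ := hf b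
  exact DFunLike.congr_fun h a

/-- `theta` is injective for finitely presented modules. -/
lemma theta_fp_injective (N : Type) [AddCommGroup N] [Module R N]
    {nn mm : ℕ} (π : (Fin nn → R) →ₗ[R] N) (hπ : Function.Surjective π)
    (d : (Fin mm → R) →ₗ[R] (Fin nn → R)) (hd : Function.Exact d π) :
    Function.Injective (theta (R := R) (I := I) N) := by
  rw [injective_iff_map_eq_zero]
  intro x hx
  obtain ⟨x', rfl⟩ := LinearMap.rTensor_surjective (CharacterModule I) hπ x
  set c := theta (Fin nn → R) x' with hc
  have hnat : CharacterModule.dual (π.lcomp R I) c = 0 := by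
    rw [hc, ← theta_natural π x', hx]
  have hker : ∀ f : (Fin nn → R) →ₗ[R] I, (d.lcomp R I) f = 0 → c f = 0 := by
    intro f hf
    have hle : LinearMap.ker π ≤ LinearMap.ker f := by
      intro v hv
      obtain ⟨w, rfl⟩ := (hd v).1 hv
      exact DFunLike.congr_fun hf w
    let f' : N →ₗ[R] I := (Submodule.liftQ _ f hle) ∘ₗ
      (LinearMap.quotKerEquivOfSurjective π hπ).symm.toLinearMap
    have hf' : π.lcomp R I f' = f := by
      refine LinearMap.ext fun v => ?_
      show (Submodule.liftQ _ f hle)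
        ((LinearMap.quotKerEquivOfSurjective π hπ).symm (π v)) = f v
      have hq : (LinearMap.quotKerEquivOfSurjective π hπ).symm (π v)
          = Submodule.Quotient.mk v := by
        rw [LinearEquiv.symm_apply_eq]
        simp [LinearMap.quotKerEquivOfSurjective]
      rw [hq]
      rfl
    have h5 := DFunLike.congr_fun hnat f'
    rw [← hf']
    exact h5
  obtain ⟨c', hc'⟩ := char_factor (d.lcomp R I) c hker
  obtain ⟨z, hz⟩ := theta_pi_surjective mm c'
  have hnat2 : theta (Fin nn → R) (d.rTensor (CharacterModule I) z) = c := by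
    rw [theta_natural d z, hz]
    ext f
    exact hc' f
  have hx' : x' = d.rTensor (CharacterModule I) z :=
    theta_pi_injective nn hnat2.symm
  rw [hx']
  have h9 : (π ∘ₗ d).rTensor (CharacterModule I) z
      = π.rTensor (CharacterModule I) (d.rTensor (CharacterModule I) z) :=
    LinearMap.rTensor_comp_apply _ _ _ z
  have hpd : π ∘ₗ d = 0 := LinearMap.ext fun w => hd.apply_apply_eq_zero w
  rw [← h9, hpd, LinearMap.rTensor_zero, LinearMap.zero_apply]

/-- Over a noetherian ring, the character module of an injective module is flat. -/
lemma flat_characterModule [IsNoetherianRing R] (hI : Module.Injective R I) :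
    Module.Flat R (CharacterModule I) := by
  rw [Module.Flat.iff_rTensor_injective']
  intro J
  have hlcomp : Function.Surjective ((J.subtype).lcomp R I) := by
    intro φ
    obtain ⟨h, hh⟩ := hI.out J.subtype (Submodule.injective_subtype J) φ
    exact ⟨h, LinearMap.ext fun v => hh v⟩
  have hdualinj := dual_injective_of_surjective (R := R) hlcomp
  rw [injective_iff_map_eq_zero]
  intro x hx
  have h0 : CharacterModule.dual ((J.subtype).lcomp R I) (theta J x) = 0 := by
    rw [← theta_natural J.subtype x, hx, map_zero]
  have h1 : theta (R := R) (I := I) J x = 0 := by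
    apply hdualinj
    rw [h0, map_zero]
  have : Module.Finite R J := Module.Finite.iff_fg.mpr (IsNoetherian.noetherian J)
  obtain ⟨nn, π, hπ⟩ := Module.Finite.exists_fin' R J
  have : Module.Finite R (LinearMap.ker π) :=
    Module.Finite.iff_fg.mpr (IsNoetherian.noetherian _)
  obtain ⟨mm, d', hd'⟩ := Module.Finite.exists_fin' R (LinearMap.ker π)
  set d := (LinearMap.ker π).subtype ∘ₗ d' with hdd
  have hex : Function.Exact d π := by
    rw [LinearMap.exact_iff]
    rw [hdd, LinearMap.range_comp, LinearMap.range_eq_top.2 hd',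
      Submodule.map_top, Submodule.range_subtype]
  exact theta_fp_injective J π hπ d hex h1

end TensorInjAux

/-- If `0 → M → F → C → 0` is exact and `0 → Hom(C,F') → Hom(F,F') → Hom(M,F') → 0`
is exact for every flat module `F'`, then `0 → M ⊗ I → F ⊗ I → C ⊗ I → 0` is exact
for every injective module `I` over a commutative noetherian local ring. -/
theorem tensor_injective_exact (R : Type) [CommRing R] [IsNoetherianRing R] [IsLocalRing R]
    (I : Type) [AddCommGroup I] [Module R I] (hI : Module.Injective R I)
    (M F C : Type) [AddCommGroup M] [Module R M] [AddCommGroup F] [Module R F]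
    [AddCommGroup C] [Module R C]
    (i : M →ₗ[R] F) (p : F →ₗ[R] C)
    (hi : Function.Injective i) (he : Function.Exact i p) (hp : Function.Surjective p)
    (hhom : ∀ (F' : Type) [AddCommGroup F'] [Module R F'], Module.Flat R F' →
      Function.Injective (LinearMap.lcomp R F' p) ∧
      Function.Exact (LinearMap.lcomp R F' p) (LinearMap.lcomp R F' i) ∧
      Function.Surjective (LinearMap.lcomp R F' i)) :
    Function.Injective (LinearMap.rTensor I i) ∧
      Function.Exact (LinearMap.rTensor I i) (LinearMap.rTensor I p) ∧
      Function.Surjective (LinearMap.rTensor I p) := by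
  obtain ⟨-, -, h3⟩ := hhom (CharacterModule I) (TensorInjAux.flat_characterModule hI)
  exact ⟨rTensor_injective_iff_lcomp_surjective.2 h3,
    rTensor_exact I he hp, LinearMap.rTensor_surjective I hp⟩
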